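/- Let F be an algebraically closed field of characteristic zero and let ι : P(m,k) → Ten(m,k) be the F-linear embedding of homogeneous degree-k polynomials as symmetric k-tensors, determined by ι(ℓ_1 ℓ_2 ⋯ ℓ_k) = (1/k!) Σ_{σ ∈ S_k} ℓ_{σ(1)} ⊗ ℓ_{σ(2)} ⊗ ⋯ ⊗ ℓ_{σ(k)} for all linear forms ℓ_1,…,ℓ_k (identifying each linear form with its coefficient vector in F^m); in particular ι(ℓ^k) = ℓ ⊗ ℓ ⊗ ⋯ ⊗ ℓ. Then for every f ∈ P(m,k) one has trk(ι(f)) ≤ wrk(f) ≤ 2^{k−1} · trk(ι(f)). -/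

import Mathlib

open scoped TensorProduct
open PiTensorProduct MvPolynomial

section Aux
open Finset

private def fib {K : ℕ} (g : Fin K → Fin K) (j : Fin K) : ℕ :=
  (univ.filter fun i => g i = j).card

private lemma sum_fib {K : ℕ} (g : Fin K → Fin K) : ∑ j, fib g j = K := by
  have := Finset.card_eq_sum_card_fiberwise (s := (univ : Finset (Fin K)))
    (t := univ) (f := g) (fun a _ => mem_univ _)
  simpa [fib] using this.symm

private lemma fib_of_bij {K : ℕ} {g : Fin K → Fin K} (hg : Function.Bijective g)
    (j : Fin K) : fib g j = 1 := by
  classical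
  obtain ⟨i0, hi0⟩ := hg.2 j
  have : (univ.filter fun i => g i = j) = {i0} := by
    ext i
    simp only [mem_filter, mem_univ, true_and, mem_singleton]
    exact ⟨fun h => hg.1 (h.trans hi0.symm), fun h => h ▸ hi0⟩
  simp [fib, this]

private lemma cast_odd {n : ℕ} (hn : Odd n) : (n : ZMod 2) = 1 := by
  rw [← ZMod.natCast_mod, Nat.odd_iff.mp hn, Nat.cast_one]

private lemma odd_of_cast {n : ℕ} (hn : (n : ZMod 2) = 1) : Odd n := by
  rw [Nat.odd_iff]
  rw [← ZMod.natCast_mod] at hn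
  have h2 : n % 2 < 2 := Nat.mod_lt _ (by norm_num)
  interval_cases h : n % 2
  · simp at hn
  · rfl

private lemma bij_of_odd_fib {K : ℕ} (g : Fin (K+1) → Fin (K+1))
    (h : ∀ j, j ≠ 0 → Odd (fib g j)) : Function.Bijective g := by
  classical
  have hsum : fib g 0 + ∑ j ∈ univ.erase 0, fib g j = K + 1 := by
    rw [Finset.add_sum_erase _ _ (mem_univ 0)]; exact sum_fib g
  have hcard : (univ.erase (0 : Fin (K+1))).card = K := by simp
  have hge : ∀ j ∈ univ.erase (0 : Fin (K+1)), 1 ≤ fib g j :=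
    fun j hj => (h j (Finset.ne_of_mem_erase hj)).pos
  have hSge : K ≤ ∑ j ∈ univ.erase 0, fib g j := by
    calc K = ∑ _j ∈ univ.erase (0 : Fin (K+1)), 1 := by simp [hcard]
    _ ≤ _ := Finset.sum_le_sum hge
  have hfib0le : fib g 0 ≤ 1 := by omega
  have hfib0 : fib g 0 = 1 := by
    rcases Nat.lt_or_ge (fib g 0) 1 with h0 | h0
    · exfalso
      have hz : fib g 0 = 0 := by omega
      -- parity contradiction
      have hc : ((K + 1 : ℕ) : ZMod 2) = ∑ j ∈ univ.erase (0 : Fin (K+1)), ((fib g j : ℕ) : ZMod 2) := by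
        rw [← Nat.cast_sum]
        exact_mod_cast (congrArg (Nat.cast (R := ZMod 2)) (by omega : (∑ j ∈ univ.erase (0:Fin (K+1)), fib g j) = K + 1)).symm
      have hones : ∑ j ∈ univ.erase (0 : Fin (K+1)), ((fib g j : ℕ) : ZMod 2)
          = (K : ZMod 2) := by
        rw [Finset.sum_congr rfl fun j hj => cast_odd (h j (Finset.ne_of_mem_erase hj))]
        simp [hcard]
      rw [hones] at hc
      push_cast at hc
      have : (1 : ZMod 2) = 0 := by linear_combination hc
      simp at this
    · omega
  have hS : ∑ j ∈ univ.erase (0 : Fin (K+1)), fib g j = K := by omega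
  have hall : ∀ j, fib g j = 1 := by
    intro j
    rcases eq_or_ne j 0 with rfl | hj
    · exact hfib0
    · by_contra hne
      have h2 : 1 < fib g j := lt_of_le_of_ne (hge j (Finset.mem_erase.2 ⟨hj, mem_univ _⟩)) (Ne.symm hne)
      have : (∑ _j ∈ univ.erase (0 : Fin (K+1)), 1) < ∑ j ∈ univ.erase (0:Fin (K+1)), fib g j :=
        Finset.sum_lt_sum hge ⟨j, Finset.mem_erase.2 ⟨hj, mem_univ _⟩, h2⟩
      simp [hcard, hS] at this
  have hinj : Function.Injective g := by
    intro a b hab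
    have ha : a ∈ univ.filter fun i => g i = g b := by simp [hab]
    have hb : b ∈ univ.filter fun i => g i = g b := by simp
    have := hall (g b)
    rw [fib, Finset.card_eq_one] at this
    obtain ⟨w, hw⟩ := this
    rw [hw] at ha hb
    simp at ha hb; omega
  exact Finite.injective_iff_bijective.mp hinj

section KeyId
variable {A : Type*} [CommRing A] {K : ℕ}

private def sg (A : Type*) [CommRing A] (t : Bool) : A := if t then -1 else 1

private lemma key_identity (y : Fin (K+1) → A) :
    (2 ^ K * (K+1).factorial) • ∏ j, y j
      = ∑ b ∈ Fintype.piFinset (fun j : Fin (K+1) =>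
            if j = 0 then {false} else (Finset.univ : Finset Bool)),
          (∏ j, sg A (b j)) * (∑ j, sg A (b j) * y j) ^ (K + 1) := by
  classical
  -- expand the power
  have hpow : ∀ b : Fin (K+1) → Bool,
      (∑ j, sg A (b j) * y j) ^ (K + 1)
        = ∑ g : Fin (K+1) → Fin (K+1), ∏ i, (sg A (b (g i)) * y (g i)) := by
    intro b
    simpa using Fintype.sum_pow (fun j => sg A (b j) * y j) (K+1)
  have step1 : ∑ b ∈ Fintype.piFinset (fun j : Fin (K+1) =>
            if j = 0 then {false} else (Finset.univ : Finset Bool)),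
          (∏ j, sg A (b j)) * (∑ j, sg A (b j) * y j) ^ (K + 1)
      = ∑ g : Fin (K+1) → Fin (K+1), ∑ b ∈ Fintype.piFinset (fun j : Fin (K+1) =>
            if j = 0 then {false} else (Finset.univ : Finset Bool)),
          (∏ j, sg A (b j)) * ∏ i, (sg A (b (g i)) * y (g i)) := by
    rw [Finset.sum_comm]
    exact Finset.sum_congr rfl fun b _ => by rw [hpow b, Finset.mul_sum]
  rw [step1]
  -- rewrite each (b,g) term
  have hterm : ∀ (b : Fin (K+1) → Bool) (g : Fin (K+1) → Fin (K+1)),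
      (∏ j, sg A (b j)) * ∏ i, (sg A (b (g i)) * y (g i))
        = (∏ i, y (g i)) * ∏ j, sg A (b j) ^ (fib g j + 1) := by
    intro b g
    rw [Finset.prod_mul_distrib]
    have h1 : ∏ i, sg A (b (g i)) = ∏ j, sg A (b j) ^ fib g j := by
      rw [Finset.prod_comp (fun j => sg A (b j)) g]
      refine Finset.prod_subset (Finset.subset_univ _) ?_
      intro j _ hj
      have : fib g j = 0 := by
        rw [fib, Finset.card_eq_zero, Finset.filter_eq_empty_iff]
        intro i _
        exact fun hgi => hj (Finset.mem_image.2 ⟨i, mem_univ i, hgi⟩)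
      rw [fib] at *
      simp [this]
    have h2 : ∏ j, sg A (b j) ^ (fib g j + 1)
        = (∏ j, sg A (b j)) * ∏ j, sg A (b j) ^ fib g j := by
      rw [← Finset.prod_mul_distrib]
      exact Finset.prod_congr rfl fun j _ => (pow_succ' _ _)
    rw [h1, h2]
    ring
  have step2 : ∀ g : Fin (K+1) → Fin (K+1),
      ∑ b ∈ Fintype.piFinset (fun j : Fin (K+1) =>
            if j = 0 then {false} else (Finset.univ : Finset Bool)),
          (∏ j, sg A (b j)) * ∏ i, (sg A (b (g i)) * y (g i))
        = (∏ i, y (g i)) * ∑ b ∈ Fintype.piFinset (fun j : Fin (K+1) =>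
            if j = 0 then {false} else (Finset.univ : Finset Bool)),
            ∏ j, sg A (b j) ^ (fib g j + 1) := by
    intro g
    rw [Finset.mul_sum]
    exact Finset.sum_congr rfl fun b _ => hterm b g
  have hinner : ∀ g : Fin (K+1) → Fin (K+1),
      ∑ b ∈ Fintype.piFinset (fun j : Fin (K+1) =>
            if j = 0 then {false} else (Finset.univ : Finset Bool)),
            ∏ j, sg A (b j) ^ (fib g j + 1)
        = if Function.Bijective g then (2:A)^K else 0 := by
    intro g
    rw [← Finset.prod_univ_sum (fun j : Fin (K+1) =>
          if j = 0 then ({false} : Finset Bool) else Finset.univ)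
        (fun j t => sg A t ^ (fib g j + 1))]
    have hfac : ∀ j : Fin (K+1),
        (∑ t ∈ (if j = 0 then ({false} : Finset Bool) else Finset.univ),
          sg A t ^ (fib g j + 1))
        = if j = 0 then 1 else (if Odd (fib g j) then 2 else 0) := by
      intro j
      by_cases hj : j = 0
      · simp [hj, sg]
      · rw [if_neg hj, if_neg hj, Fintype.sum_bool]
        rcases Nat.even_or_odd (fib g j) with he | ho
        · rw [if_neg (by simpa [Nat.not_odd_iff_even] using he)]
          have : Odd (fib g j + 1) := he.add_one
          simp [sg, this.neg_one_pow]
        · rw [if_pos ho]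
          have : Even (fib g j + 1) := ho.add_one
          simp [sg, this.neg_one_pow]
          ring
    rw [Finset.prod_congr rfl fun j _ => hfac j]
    by_cases hg : ∀ j, j ≠ 0 → Odd (fib g j)
    · rw [if_pos (bij_of_odd_fib g hg)]
      have : ∀ j : Fin (K+1), (if j = 0 then (1:A) else (if Odd (fib g j) then 2 else 0))
          = if j = 0 then 1 else 2 := by
        intro j
        by_cases hj : j = 0 <;> simp [hj, hg j]
      rw [Finset.prod_congr rfl fun j _ => this j]
      rw [Fin.prod_univ_succ]
      simp [Fin.succ_ne_zero]
    · rw [if_neg (fun hb => hg fun j hj => by rw [fib_of_bij hb j]; exact odd_one)]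
      push_neg at hg
      obtain ⟨j0, hj0, hodd⟩ := hg
      exact Finset.prod_eq_zero (mem_univ j0) (by simp [hj0, hodd])
  have step3 : ∑ g : Fin (K+1) → Fin (K+1),
      (∏ i, y (g i)) * (if Function.Bijective g then (2:A)^K else 0)
      = (K+1).factorial • ((∏ j, y j) * 2^K) := by
    have : ∀ g : Fin (K+1) → Fin (K+1),
        (∏ i, y (g i)) * (if Function.Bijective g then (2:A)^K else 0)
        = if Function.Bijective g then (∏ i, y (g i)) * 2^K else 0 := by
      intro g; by_cases hb : Function.Bijective g <;> simp [hb]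
    rw [Finset.sum_congr rfl fun g _ => this g, Finset.sum_ite, Finset.sum_const_zero,
      add_zero]
    have hc : ∀ g ∈ Finset.univ.filter (fun g : Fin (K+1) → Fin (K+1) => Function.Bijective g),
        (∏ i, y (g i)) * (2:A)^K = (∏ j, y j) * 2^K := by
      intro g hgmem
      rw [(Finset.mem_filter.mp hgmem).2.prod_comp y]
    rw [Finset.sum_congr rfl hc, Finset.sum_const]
    congr 1
    rw [← Fintype.card_subtype]
    have e : {g : Fin (K+1) → Fin (K+1) // Function.Bijective g} ≃ Equiv.Perm (Fin (K+1)) :=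
      { toFun := fun g => Equiv.ofBijective g.1 g.2
        invFun := fun σ => ⟨σ, σ.bijective⟩
        left_inv := fun g => rfl
        right_inv := fun σ => Equiv.ext fun x => rfl }
    rw [Fintype.card_congr e, Fintype.card_perm, Fintype.card_fin]
  rw [Finset.sum_congr rfl fun g (_ : g ∈ Finset.univ) => (step2 g).trans
    (by rw [hinner g]), step3]
  rw [nsmul_eq_mul, nsmul_eq_mul]
  push_cast
  ring
end KeyId

variable {F : Type*} [Field F] [CharZero F] {m k : ℕ}

-- single representation of degree-one finsupps
private lemma single_of_degree_one {a : Fin m →₀ ℕ} (ha : a.degree = 1) :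
    ∃ x, a = Finsupp.single x 1 := by
  classical
  have hne : a.support.Nonempty := by
    rw [Finset.nonempty_iff_ne_empty]
    intro h
    rw [Finsupp.degree_apply, h] at ha
    simp at ha
  obtain ⟨x, hx⟩ := hne
  have hax : 1 ≤ a x := Nat.one_le_iff_ne_zero.2 (Finsupp.mem_support_iff.1 hx)
  have hsum : a x + ∑ y ∈ a.support.erase x, a y = 1 := by
    rw [Finset.add_sum_erase _ _ hx]; exact ha
  have hz : ∀ y ∈ a.support.erase x, a y = 0 := by
    rw [← Finset.sum_eq_zero_iff]; omega
  refine ⟨x, (Finsupp.eq_single_iff).2 ⟨?_, by omega⟩⟩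
  intro y hy
  simp only [Finset.mem_singleton]
  by_contra hyx
  exact (Finsupp.mem_support_iff.1 hy) (hz y (Finset.mem_erase.2 ⟨hyx, hy⟩))

private lemma homog_one_form {p : MvPolynomial (Fin m) F} (hp : p.IsHomogeneous 1) :
    p = ∑ x : Fin m, C (p.coeff (Finsupp.single x 1)) * X x := by
  classical
  have hsub : p.support ⊆ univ.image (fun x : Fin m => Finsupp.single x 1) := by
    intro a ha
    have hdeg : a.degree = 1 := by
      by_contra h
      exact (MvPolynomial.mem_support_iff.1 ha) (hp.coeff_eq_zero h)
    obtain ⟨x, rfl⟩ := single_of_degree_one hdeg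
    exact Finset.mem_image.2 ⟨x, mem_univ x, rfl⟩
  conv_lhs => rw [p.as_sum]
  rw [Finset.sum_subset hsub (fun a _ ha => by
    rw [MvPolynomial.notMem_support_iff.1 ha, map_zero])]
  rw [Finset.sum_image (fun x _ y _ h => Finsupp.single_left_injective one_ne_zero h)]
  exact Finset.sum_congr rfl fun x _ => (C_mul_X_eq_monomial).symm

-- monomials as words
private lemma exists_word {a : Fin m →₀ ℕ} (ha : a.degree = k) :
    ∃ w : Fin k → Fin m, (monomial a (1:F)) = ∏ j : Fin k, X (w j) := by
  classical
  set l := a.toMultiset.toList with hl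
  have hlen : l.length = k := by
    rw [hl, Multiset.length_toList]
    simpa [Finsupp.degree_apply, Finsupp.sum] using ha
  refine ⟨fun j => l.get (Fin.cast hlen.symm j), ?_⟩
  have h1 : ∏ j : Fin k, (X (l.get (Fin.cast hlen.symm j)) : MvPolynomial (Fin m) F)
      = ∏ i : Fin l.length, X (l.get i) :=
    Fintype.prod_equiv (finCongr hlen.symm) _ _ (fun j => rfl)
  rw [h1]
  have h2 : ∏ i : Fin l.length, (X (l.get i) : MvPolynomial (Fin m) F)
      = (a.toMultiset.map X).prod := by
    have : (a.toMultiset.map X) = Multiset.ofList (l.map (X : Fin m → MvPolynomial (Fin m) F)) := by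
      conv_lhs => rw [← Multiset.coe_toList (Finsupp.toMultiset a), Multiset.map_coe]
    rw [this, Multiset.prod_coe, ← Fin.prod_univ_fun_getElem l X]
    rfl
  rw [h2, Finsupp.toMultiset_map, Finsupp.prod_toMultiset]
  rw [Finsupp.prod_mapDomain_index (fun _ => pow_zero _) (fun _ _ _ => pow_add _ _ _)]
  rw [MvPolynomial.monomial_eq, MvPolynomial.C_1, one_mul]

noncomputable def symMap (F : Type*) [Field F] (m k : ℕ) :
    (⨂[F] _ : Fin k, (Fin m → F)) →ₗ[F] (⨂[F] _ : Fin k, (Fin m → F)) :=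
  PiTensorProduct.lift ((k.factorial : F)⁻¹ • ∑ σ : Equiv.Perm (Fin k),
    (PiTensorProduct.tprod F).domDomCongr σ)

lemma symMap_tprod (v : Fin k → Fin m → F) :
    symMap F m k (⨂ₜ[F] j, v j)
      = (k.factorial : F)⁻¹ • ∑ σ : Equiv.Perm (Fin k), ⨂ₜ[F] j, v (σ j) := by
  simp [symMap, PiTensorProduct.lift.tprod, MultilinearMap.smul_apply,
    MultilinearMap.sum_apply, MultilinearMap.domDomCongr_apply]

lemma symMap_tprod_perm (c : Fin k → Fin m → F) (τ : Equiv.Perm (Fin k)) :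
    symMap F m k (⨂ₜ[F] j, c (τ j)) = symMap F m k (⨂ₜ[F] j, c j) := by
  rw [symMap_tprod, symMap_tprod]
  congr 1
  exact Fintype.sum_equiv (Equiv.mulLeft τ) _ _
    (fun σ => by simp [Equiv.Perm.mul_apply])

lemma symMap_symmetrized (c : Fin k → Fin m → F) :
    symMap F m k ((k.factorial : F)⁻¹ • ∑ σ : Equiv.Perm (Fin k), ⨂ₜ[F] j, c (σ j))
      = (k.factorial : F)⁻¹ • ∑ σ : Equiv.Perm (Fin k), ⨂ₜ[F] j, c (σ j) := by
  have hkf : ((k.factorial : F)) ≠ 0 := by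
    exact_mod_cast Nat.cast_ne_zero.2 (Nat.factorial_ne_zero k)
  rw [map_smul, map_sum]
  rw [Finset.sum_congr rfl fun τ _ => symMap_tprod_perm c τ]
  rw [Finset.sum_const, card_univ, Fintype.card_perm, Fintype.card_fin, symMap_tprod]
  rw [smul_comm, ← Nat.cast_smul_eq_nsmul F, smul_smul, smul_smul]
  congr 1
  field_simp

/-- every tensor is a sum of simple tensors -/
lemma exists_simple_decomp (hk : 0 < k) (T : ⨂[F] _ : Fin k, (Fin m → F)) :
    ∃ (r : ℕ) (v : Fin r → Fin k → Fin m → F), T = ∑ i, ⨂ₜ[F] j, v i j := by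
  classical
  have hT : T ∈ Submodule.span F (Set.range (tprod F (s := fun _ : Fin k => Fin m → F))) := by
    rw [PiTensorProduct.span_tprod_eq_top]; trivial
  obtain ⟨n, cc, g, hg⟩ := Submodule.mem_span_set'.mp hT
  choose w hw using fun i => (g i).2
  refine ⟨n, fun i => Function.update (w i) ⟨0, hk⟩ (cc i • w i ⟨0, hk⟩), ?_⟩
  rw [← hg]
  refine Finset.sum_congr rfl fun i _ => ?_
  have h2 := MultilinearMap.map_update_smul (tprod F (s := fun _ : Fin k => Fin m → F)) (w i)
    ⟨0, hk⟩ (cc i) (w i ⟨0, hk⟩)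
  rw [Function.update_eq_self] at h2
  rw [← hw i, ← h2]

private lemma linform_homog (c : Fin m → F) :
    (∑ x, C (c x) * X x : MvPolynomial (Fin m) F).IsHomogeneous 1 := by
  apply MvPolynomial.IsHomogeneous.sum
  intro x _
  simpa using (MvPolynomial.isHomogeneous_C (Fin m) (c x)).mul (MvPolynomial.isHomogeneous_X F x)

private lemma prod_linform_mem (c : Fin k → Fin m → F) :
    (∏ j : Fin k, ∑ x : Fin m, C (c j x) * X x)
      ∈ MvPolynomial.homogeneousSubmodule (Fin m) F k := by
  rw [MvPolynomial.mem_homogeneousSubmodule]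
  have := MvPolynomial.IsHomogeneous.prod Finset.univ
    (fun j : Fin k => ∑ x : Fin m, C (c j x) * X x) (fun _ => 1)
    (fun j _ => linform_homog (c j))
  simpa using this

private lemma symInv (hk : 0 < k)
    (ι : (MvPolynomial.homogeneousSubmodule (Fin m) F k) →ₗ[F]
          (⨂[F] _ : Fin k, (Fin m → F)))
    (hformula : ∀ c : Fin k → Fin m → F,
      ∀ hmem : (∏ j : Fin k, ∑ x : Fin m, C (c j x) * X x)
          ∈ MvPolynomial.homogeneousSubmodule (Fin m) F k,
        ι ⟨∏ j : Fin k, ∑ x : Fin m, C (c j x) * X x, hmem⟩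
          = ((k.factorial : F))⁻¹ • ∑ σ : Equiv.Perm (Fin k), ⨂ₜ[F] j, c (σ j))
    (f : MvPolynomial.homogeneousSubmodule (Fin m) F k) :
    symMap F m k (ι f) = ι f := by
  classical
  -- reduce to words
  set term : (Fin m →₀ ℕ) → MvPolynomial.homogeneousSubmodule (Fin m) F k :=
    fun a => if h : a.degree = k
      then (MvPolynomial.coeff a (f : MvPolynomial (Fin m) F)) •
        ⟨monomial a (1:F), MvPolynomial.isHomogeneous_monomial _ h⟩ else 0 with hterm
  have hf : f = ∑ a ∈ (f : MvPolynomial (Fin m) F).support, term a := by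
    apply Subtype.ext
    rw [AddSubmonoidClass.coe_finset_sum]
    conv_lhs => rw [(f : MvPolynomial (Fin m) F).as_sum]
    refine Finset.sum_congr rfl fun a ha => ?_
    have hdeg : a.degree = k := by
      by_contra h
      exact (MvPolynomial.mem_support_iff.1 ha) ((f.2 : MvPolynomial.IsHomogeneous _ k).coeff_eq_zero h)
    rw [hterm]
    simp only [hdeg, dif_pos]
    rw [Submodule.coe_smul, MvPolynomial.smul_monomial, smul_eq_mul, mul_one]
  have hword : ∀ a : Fin m →₀ ℕ, a.degree = k →
      ∀ hmem : monomial a (1:F) ∈ MvPolynomial.homogeneousSubmodule (Fin m) F k,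
      symMap F m k (ι ⟨monomial a 1, hmem⟩) = ι ⟨monomial a 1, hmem⟩ := by
    intro a ha hmem
    obtain ⟨w, hw⟩ := exists_word (F := F) ha
    set c : Fin k → Fin m → F := fun j x => if x = w j then 1 else 0 with hc
    have hprod : (∏ j : Fin k, ∑ x : Fin m, C (c j x) * X x) = monomial a (1:F) := by
      rw [hw]
      refine Finset.prod_congr rfl fun j _ => ?_
      rw [hc]
      simp [apply_ite C, ite_mul]
    have hmem' := prod_linform_mem (F := F) c
    have heq : (⟨monomial a 1, hmem⟩ : MvPolynomial.homogeneousSubmodule (Fin m) F k)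
        = ⟨∏ j : Fin k, ∑ x : Fin m, C (c j x) * X x, hmem'⟩ := Subtype.ext hprod.symm
    rw [heq, hformula c hmem', symMap_symmetrized]
  rw [hf, map_sum, map_sum]
  refine Finset.sum_congr rfl fun a ha => ?_
  have hdeg : a.degree = k := by
    by_contra h
    exact (MvPolynomial.mem_support_iff.1 ha) ((f.2 : MvPolynomial.IsHomogeneous _ k).coeff_eq_zero h)
  rw [hterm]
  simp only [hdeg, dif_pos]
  rw [map_smul, map_smul]
  congr 1
  exact hword a hdeg _

private lemma decomp_to_waring [IsAlgClosed F] (hk : 0 < k)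
    (ι : (MvPolynomial.homogeneousSubmodule (Fin m) F k) →ₗ[F]
          (⨂[F] _ : Fin k, (Fin m → F)))
    (hinj : Function.Injective ι)
    (hformula : ∀ c : Fin k → Fin m → F,
      ∀ hmem : (∏ j : Fin k, ∑ x : Fin m, C (c j x) * X x)
          ∈ MvPolynomial.homogeneousSubmodule (Fin m) F k,
        ι ⟨∏ j : Fin k, ∑ x : Fin m, C (c j x) * X x, hmem⟩
          = ((k.factorial : F))⁻¹ • ∑ σ : Equiv.Perm (Fin k), ⨂ₜ[F] j, c (σ j))
    (f : MvPolynomial.homogeneousSubmodule (Fin m) F k)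
    {r : ℕ} (v : Fin r → Fin k → Fin m → F)
    (hv : ι f = ∑ i, ⨂ₜ[F] j, v i j) :
    ∃ ℓ : Fin (2^(k-1) * r) → MvPolynomial (Fin m) F,
      (∀ i, (ℓ i).IsHomogeneous 1) ∧ (f : MvPolynomial (Fin m) F) = ∑ i, (ℓ i)^k := by
  classical
  set ℓp : Fin r → Fin k → MvPolynomial (Fin m) F :=
    fun i j => ∑ x, C (v i j x) * X x with hℓp
  have hmem : ∀ i, (∏ j, ℓp i j) ∈ MvPolynomial.homogeneousSubmodule (Fin m) F k :=
    fun i => prod_linform_mem (v i)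
  set g : MvPolynomial.homogeneousSubmodule (Fin m) F k :=
    ∑ i, ⟨∏ j, ℓp i j, hmem i⟩ with hg
  have hig : ι g = ι f := by
    rw [hg, map_sum, Finset.sum_congr rfl fun i _ => hformula (v i) (hmem i),
      Finset.sum_congr rfl fun i _ => (symMap_tprod (v i)).symm,
      ← map_sum, ← hv, symInv hk ι hformula f]
  have hgf : (f : MvPolynomial (Fin m) F) = ∑ i, ∏ j, ℓp i j := by
    rw [← hinj hig, hg, AddSubmonoidClass.coe_finset_sum]
  have hℓphom : ∀ i j, (ℓp i j).IsHomogeneous 1 := fun i j => linform_homog (v i j)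
  clear hig hv hg g hmem
  obtain ⟨K, rfl⟩ : ∃ K, k = K + 1 := ⟨k - 1, by omega⟩
  set B := Fintype.piFinset (fun j : Fin (K+1) =>
    if j = 0 then ({false} : Finset Bool) else Finset.univ) with hB
  set sgF : (Fin (K+1) → Bool) → F := fun b => ∏ j, (if b j then (-1:F) else 1) with hsgF
  set q : F := ((2^K * (K+1).factorial : ℕ) : F)⁻¹ with hq
  have hqN : ((2^K * (K+1).factorial : ℕ) : F) ≠ 0 :=
    Nat.cast_ne_zero.2 (by positivity)
  set L : Fin r → (Fin (K+1) → Bool) → MvPolynomial (Fin m) F :=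
    fun i b => ∑ j, sg (MvPolynomial (Fin m) F) (b j) * ℓp i j with hL
  have hsgC : ∀ t : Bool, sg (MvPolynomial (Fin m) F) t = C (if t then (-1:F) else 1) := by
    intro t; cases t <;> simp [sg]
  have hLhom : ∀ i b, (L i b).IsHomogeneous 1 := by
    intro i b
    apply MvPolynomial.IsHomogeneous.sum
    intro j _
    rw [hsgC]
    simpa using (MvPolynomial.isHomogeneous_C (Fin m) _).mul (hℓphom i j)
  have hkey : ∀ i, ∏ j, ℓp i j = ∑ b ∈ B, (q * sgF b) • (L i b)^(K+1) := by
    intro i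
    have h0 := key_identity (ℓp i)
    have h1 : ((2^K * (K+1).factorial : ℕ) : F) • ∏ j, ℓp i j
        = ∑ b ∈ B, (∏ j, sg (MvPolynomial (Fin m) F) (b j)) * (L i b)^(K+1) := by
      rw [Nat.cast_smul_eq_nsmul]; exact h0
    have h2 : ∏ j, ℓp i j = q • ∑ b ∈ B, (∏ j, sg (MvPolynomial (Fin m) F) (b j)) * (L i b)^(K+1) := by
      rw [← h1, hq, smul_smul, inv_mul_cancel₀ hqN, one_smul]
    rw [h2, Finset.smul_sum]
    refine Finset.sum_congr rfl fun b _ => ?_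
    have h3 : (∏ j, sg (MvPolynomial (Fin m) F) (b j)) = C (sgF b) := by
      rw [hsgF, map_prod]
      exact Finset.prod_congr rfl fun j _ => hsgC (b j)
    rw [h3, MvPolynomial.C_mul', smul_smul]
  choose d hd using fun b : Fin (K+1) → Bool =>
    IsAlgClosed.exists_pow_nat_eq (k := F) (q * sgF b) (n := K+1) (by omega)
  set ℓ' : Fin r → (Fin (K+1) → Bool) → MvPolynomial (Fin m) F :=
    fun i b => C (d b) * L i b with hℓ'
  have hℓ'pow : ∀ i b, (ℓ' i b)^(K+1) = (q * sgF b) • (L i b)^(K+1) := by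
    intro i b
    rw [hℓ', mul_pow, ← map_pow, hd b, MvPolynomial.C_mul']
  have hfsum : (f : MvPolynomial (Fin m) F) = ∑ i, ∑ b ∈ B, (ℓ' i b)^(K+1) := by
    rw [hgf]
    exact Finset.sum_congr rfl fun i _ => by
      rw [hkey i]
      exact Finset.sum_congr rfl fun b _ => (hℓ'pow i b).symm
  have hcard : Fintype.card (Fin r × ↥B) = 2^(K+1-1) * r := by
    rw [Fintype.card_prod, Fintype.card_fin, Fintype.card_coe, hB,
      Fintype.card_piFinset]
    have : ∀ j : Fin (K+1),
        ((if j = 0 then ({false} : Finset Bool) else Finset.univ)).card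
        = if j = 0 then 1 else 2 := by
      intro j; by_cases hj : j = 0 <;> simp [hj]
    rw [Finset.prod_congr rfl fun j _ => this j, Fin.prod_univ_succ]
    simp [Fin.succ_ne_zero, mul_comm]
  set E := Fintype.equivFinOfCardEq hcard
  refine ⟨fun t => ℓ' (E.symm t).1 ((E.symm t).2 : Fin (K+1) → Bool), ?_, ?_⟩
  · intro t
    rw [hℓ']
    simpa using (MvPolynomial.isHomogeneous_C (Fin m) _).mul (hLhom _ _)
  · calc (f : MvPolynomial (Fin m) F)
        = ∑ i, ∑ b ∈ B, (ℓ' i b)^(K+1) := hfsum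
      _ = ∑ p : Fin r × ↥B, (ℓ' p.1 (p.2 : Fin (K+1) → Bool))^(K+1) := by
          rw [Fintype.sum_prod_type]
          exact (Finset.sum_congr rfl fun i _ =>
            (Finset.sum_coe_sort B (fun b => (ℓ' i b)^(K+1))).symm)
      _ = _ := (Equiv.sum_comp E.symm
            (fun p : Fin r × ↥B => (ℓ' p.1 (p.2 : Fin (K+1) → Bool))^(K+1))).symm

end Aux

/-- The tensor rank of `T ∈ (F^m)^{⊗k}`: the least `r` such that `T` is a sum of `r`
simple tensors. -/
noncomputable def trk {F : Type*} [Field F] {m k : ℕ}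
    (T : ⨂[F] _ : Fin k, (Fin m → F)) : ℕ :=
  sInf {r : ℕ | ∃ v : Fin r → Fin k → Fin m → F, T = ∑ i, ⨂ₜ[F] j, v i j}

/-- The Waring rank of a polynomial `f` in `m` variables with respect to degree `k`:
the least `r` such that `f` is a sum of `r` k-th powers of linear forms. -/
noncomputable def wrk {F : Type*} [Field F] {m : ℕ} (k : ℕ)
    (f : MvPolynomial (Fin m) F) : ℕ :=
  sInf {r : ℕ | ∃ ℓ : Fin r → MvPolynomial (Fin m) F,
    (∀ i, (ℓ i).IsHomogeneous 1) ∧ f = ∑ i, (ℓ i) ^ k}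

/-- Comparison of Waring rank and tensor rank under the symmetrization embedding
`ι : P(m,k) → Ten(m,k)`, the `F`-linear embedding determined by
`ι(ℓ₁⋯ℓ_k) = (1/k!) ∑_{σ ∈ S_k} ℓ_{σ(1)} ⊗ ⋯ ⊗ ℓ_{σ(k)}` for linear forms `ℓ_j`
(each identified with its coefficient vector `c j ∈ F^m`):
`trk(ι f) ≤ wrk(f) ≤ 2^(k-1) · trk(ι f)`. -/
theorem waring_rank_vs_tensor_rank_of_symmetrization
    {F : Type*} [Field F] [IsAlgClosed F] [CharZero F] {m k : ℕ}
    (hm : 0 < m) (hk : 0 < k)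
    (ι : (MvPolynomial.homogeneousSubmodule (Fin m) F k) →ₗ[F]
          (⨂[F] _ : Fin k, (Fin m → F)))
    (hinj : Function.Injective ι)
    (hformula : ∀ c : Fin k → Fin m → F,
      ∀ hmem : (∏ j : Fin k, ∑ x : Fin m, C (c j x) * X x)
          ∈ MvPolynomial.homogeneousSubmodule (Fin m) F k,
        ι ⟨∏ j : Fin k, ∑ x : Fin m, C (c j x) * X x, hmem⟩
          = ((k.factorial : F))⁻¹ • ∑ σ : Equiv.Perm (Fin k), ⨂ₜ[F] j, c (σ j))
    (f : MvPolynomial.homogeneousSubmodule (Fin m) F k) :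
    trk (ι f) ≤ wrk k (f : MvPolynomial (Fin m) F) ∧
      wrk k (f : MvPolynomial (Fin m) F) ≤ 2 ^ (k - 1) * trk (ι f) := by
  classical
  have hkf : ((k.factorial : F)) ≠ 0 :=
    Nat.cast_ne_zero.2 (Nat.factorial_ne_zero k)
  have hTne : {r : ℕ | ∃ v : Fin r → Fin k → Fin m → F,
      ι f = ∑ i, ⨂ₜ[F] j, v i j}.Nonempty := by
    obtain ⟨r, v, hv⟩ := exists_simple_decomp hk (ι f)
    exact ⟨r, v, hv⟩
  have htrk_mem : trk (ι f) ∈ {r : ℕ | ∃ v : Fin r → Fin k → Fin m → F,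
      ι f = ∑ i, ⨂ₜ[F] j, v i j} := Nat.sInf_mem hTne
  obtain ⟨v, hv⟩ := htrk_mem
  obtain ⟨ℓ2, hℓ2hom, hℓ2⟩ := decomp_to_waring hk ι hinj hformula f v hv
  have hw2 : wrk k (f : MvPolynomial (Fin m) F) ≤ 2 ^ (k - 1) * trk (ι f) :=
    Nat.sInf_le ⟨ℓ2, hℓ2hom, hℓ2⟩
  have hWne : {r : ℕ | ∃ ℓ : Fin r → MvPolynomial (Fin m) F,
      (∀ i, (ℓ i).IsHomogeneous 1) ∧ (f : MvPolynomial (Fin m) F) = ∑ i, (ℓ i) ^ k}.Nonempty :=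
    ⟨2 ^ (k - 1) * trk (ι f), ℓ2, hℓ2hom, hℓ2⟩
  obtain ⟨ℓ1, hhom, hf1⟩ := Nat.sInf_mem hWne
  refine ⟨?_, hw2⟩
  -- trk ≤ wrk
  set c : Fin (wrk k (f : MvPolynomial (Fin m) F)) → Fin m → F :=
    fun i x => (ℓ1 i).coeff (Finsupp.single x 1) with hc
  have hpow : ∀ i, (ℓ1 i)^k = ∏ j : Fin k, ∑ x, C (c i x) * X x := by
    intro i
    rw [Finset.prod_const, Finset.card_univ, Fintype.card_fin,
      ← homog_one_form (hhom i)]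
  have hmem_i : ∀ i, ((ℓ1 i)^k) ∈ MvPolynomial.homogeneousSubmodule (Fin m) F k := by
    intro i
    rw [hpow i]
    exact prod_linform_mem _
  have hfsub : f = ∑ i, (⟨(ℓ1 i)^k, hmem_i i⟩ :
      MvPolynomial.homogeneousSubmodule (Fin m) F k) := by
    apply Subtype.ext
    rw [AddSubmonoidClass.coe_finset_sum]
    exact hf1
  have hιf : ι f = ∑ i, ⨂ₜ[F] j, c i := by
    conv_lhs => rw [hfsub]
    rw [map_sum]
    refine Finset.sum_congr rfl fun i _ => ?_
    have heq : (⟨(ℓ1 i)^k, hmem_i i⟩ :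
        MvPolynomial.homogeneousSubmodule (Fin m) F k)
        = ⟨∏ j : Fin k, ∑ x, C (c i x) * X x, prod_linform_mem _⟩ :=
      Subtype.ext (hpow i)
    rw [heq, hformula (fun _ => c i) (prod_linform_mem _)]
    rw [Finset.sum_const, Finset.card_univ, Fintype.card_perm, Fintype.card_fin]
    rw [← Nat.cast_smul_eq_nsmul F, smul_smul, inv_mul_cancel₀ hkf, one_smul]
  exact Nat.sInf_le ⟨fun i _ => c i, hιf⟩
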